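/- arXiv:2212.12711 — 6 statements merged into one kernel-verified Lean document; each statement's English description precedes it below -/
import Mathlib

section
/- Let A be an n×n Hermitian matrix with largest eigenvalue λₙ(A) and (n,n)-entry a_{n n̄}. Then λₙ(A) ≥ a_{n n̄}, and λₙ(A) ≤ a_{n n̄} + C/a_{n n̄} for a constant C depending only on the off-diagonal entries of the last row/column and the principal (n−1)×(n−1) block, provided a_{n n̄} is large enough. -/
open Matrix Finset

section helpers
variable {m : Type*} [Fintype m] [DecidableEq m] {M : Matrix m m ℂ} (hM : M.IsHermitian)

lemma aux_l1 (i j : m) :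
    M i j = ∑ k, (hM.eigenvalues k : ℂ) *
      ((hM.eigenvectorUnitary : Matrix m m ℂ) i k *
        (starRingEnd ℂ) ((hM.eigenvectorUnitary : Matrix m m ℂ) j k)) := by
  conv_lhs => rw [hM.spectral_theorem, Unitary.conjStarAlgAut_apply]
  rw [Matrix.mul_apply]
  simp only [Matrix.mul_diagonal, Matrix.star_apply, Function.comp]
  refine Finset.sum_congr rfl fun k _ => by ring_nf; rfl

lemma aux_l1' (i : m) :
    M i i = ((∑ k, hM.eigenvalues k *
      Complex.normSq ((hM.eigenvectorUnitary : Matrix m m ℂ) i k) : ℝ) : ℂ) := by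
  rw [aux_l1 hM i i]
  push_cast
  exact Finset.sum_congr rfl fun k _ => by rw [Complex.mul_conj]

lemma aux_l2 (i : m) :
    ∑ k, Complex.normSq ((hM.eigenvectorUnitary : Matrix m m ℂ) i k) = 1 := by
  have h : (hM.eigenvectorUnitary : Matrix m m ℂ) * star (hM.eigenvectorUnitary : Matrix m m ℂ) = 1 :=
    (Matrix.mem_unitaryGroup_iff).mp hM.eigenvectorUnitary.2
  have h2 := congrFun (congrFun h i) i
  rw [Matrix.mul_apply] at h2
  rw [Matrix.one_apply_eq] at h2
  have : ∑ k, (Complex.normSq ((hM.eigenvectorUnitary : Matrix m m ℂ) i k) : ℂ) = 1 := by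
    rw [← h2]
    refine Finset.sum_congr rfl fun k _ => ?_
    rw [Matrix.star_apply]
    exact (Complex.mul_conj _).symm
  exact_mod_cast this

lemma aux_l3 : ∑ k, (hM.eigenvalues k)^2 = ∑ i, ∑ j, Complex.normSq (M i j) := by
  have h1 : star (hM.eigenvectorUnitary : Matrix m m ℂ) * (hM.eigenvectorUnitary : Matrix m m ℂ) = 1 :=
    (Matrix.mem_unitaryGroup_iff').mp hM.eigenvectorUnitary.2
  have key : M * M = (hM.eigenvectorUnitary : Matrix m m ℂ) *
      (Matrix.diagonal (fun k => ((hM.eigenvalues k : ℂ))^2)) *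
      star (hM.eigenvectorUnitary : Matrix m m ℂ) := by
    conv_lhs => rw [hM.spectral_theorem, Unitary.conjStarAlgAut_apply]
    set U := (hM.eigenvectorUnitary : Matrix m m ℂ)
    set D := Matrix.diagonal (RCLike.ofReal ∘ hM.eigenvalues : m → ℂ)
    have hDD : D * D = Matrix.diagonal (fun k => ((hM.eigenvalues k : ℂ))^2) := by
      rw [Matrix.diagonal_mul_diagonal]
      exact congrArg _ (funext fun k => by simp [sq])
    calc U * D * star U * (U * D * star U)
        = U * (D * (star U * U) * D) * star U := by noncomm_ring
      _ = U * (D * D) * star U := by rw [h1]; noncomm_ring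
      _ = _ := by rw [hDD]
  have t1 : (M * M).trace = ∑ k, ((hM.eigenvalues k : ℂ))^2 := by
    rw [key, Matrix.trace_mul_cycle, h1, Matrix.one_mul, Matrix.trace_diagonal]
  have t2 : (M * M).trace = ∑ i, ∑ j, (Complex.normSq (M i j) : ℂ) := by
    rw [Matrix.trace]
    refine Finset.sum_congr rfl fun i _ => ?_
    rw [Matrix.diag, Matrix.mul_apply]
    refine Finset.sum_congr rfl fun j _ => ?_
    rw [← hM.apply j i]
    simpa using (Complex.mul_conj (M i j))
  have h := t1.symm.trans t2
  have h' : ((∑ k, (hM.eigenvalues k)^2 : ℝ) : ℂ) = ((∑ i, ∑ j, Complex.normSq (M i j) : ℝ) : ℂ) := by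
    push_cast
    exact h
  exact_mod_cast h'

end helpers

/-- For an Hermitian matrix whose entries are fixed except for the `(n,n)` diagonal entry `a`,
the largest eigenvalue satisfies `λₙ ≥ a`, and `λₙ ≤ a + C / a` for a constant `C`
(depending only on the fixed entries) once `a` is large enough. -/
theorem stmt7 (n : ℕ) (A : ℝ → Matrix (Fin (n + 1)) (Fin (n + 1)) ℂ)
    (hA : ∀ a, (A a).IsHermitian)
    (hdiag : ∀ a, A a (Fin.last n) (Fin.last n) = (a : ℂ))
    (hfixed : ∀ a b : ℝ, ∀ i j : Fin (n + 1),
      i ≠ Fin.last n ∨ j ≠ Fin.last n → A a i j = A b i j) :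
    (∀ a : ℝ, a ≤ ⨆ i, (hA a).eigenvalues i) ∧
      ∃ C > 0, ∃ a₀ : ℝ, ∀ a ≥ a₀, (⨆ i, (hA a).eigenvalues i) ≤ a + C / a := by
  constructor
  · intro a
    set f := (hA a).eigenvalues with hf
    set U := ((hA a).eigenvectorUnitary : Matrix (Fin (n+1)) (Fin (n+1)) ℂ) with hU
    have hsum1 : ∑ k, Complex.normSq (U (Fin.last n) k) = 1 := aux_l2 (hA a) (Fin.last n)
    have ha : a = ∑ k, f k * Complex.normSq (U (Fin.last n) k) := by
      have := (aux_l1' (hA a) (Fin.last n)).symm.trans (hdiag a)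
      exact_mod_cast this.symm
    have hle : ∀ k, f k ≤ ⨆ i, f i := fun k =>
      le_ciSup (Set.Finite.bddAbove (Set.finite_range f)) k
    calc a = ∑ k, f k * Complex.normSq (U (Fin.last n) k) := ha
      _ ≤ ∑ k, (⨆ i, f i) * Complex.normSq (U (Fin.last n) k) := by
          refine Finset.sum_le_sum fun k _ => ?_
          exact mul_le_mul_of_nonneg_right (hle k) (Complex.normSq_nonneg _)
      _ = ⨆ i, f i := by rw [← Finset.mul_sum, hsum1, mul_one]
  · set R := ∑ p ∈ (Finset.univ ×ˢ Finset.univ).erase (Fin.last n, Fin.last n),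
      Complex.normSq (A 0 p.1 p.2) with hR
    have hR0 : 0 ≤ R := Finset.sum_nonneg fun p _ => Complex.normSq_nonneg _
    have expand : ∀ a : ℝ, ∑ i, ∑ j, Complex.normSq (A a i j) = a^2 + R := by
      intro a
      rw [← Finset.sum_product']
      rw [← Finset.add_sum_erase _ _ (by simp : ((Fin.last n, Fin.last n) : Fin (n+1) × Fin (n+1)) ∈ Finset.univ ×ˢ Finset.univ)]
      congr 1
      · rw [hdiag a]
        simp [Complex.normSq_ofReal, sq]
      · refine Finset.sum_congr rfl fun p hp => ?_
        have hne : p ≠ (Fin.last n, Fin.last n) := (Finset.mem_erase.mp hp).1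
        have : p.1 ≠ Fin.last n ∨ p.2 ≠ Fin.last n := by
          by_contra hc
          push_neg at hc
          exact hne (Prod.ext hc.1 hc.2)
        rw [hfixed a 0 p.1 p.2 this]
    refine ⟨R/2 + 1, by linarith, 1, fun a ha1 => ?_⟩
    have ha : (0:ℝ) < a := lt_of_lt_of_le one_pos ha1
    set f := (hA a).eigenvalues with hf
    obtain ⟨j, hj⟩ := Finite.exists_max f
    have hsup : (⨆ i, f i) ≤ f j := ciSup_le hj
    have hfj2 : (f j)^2 ≤ a^2 + R := by
      rw [← expand a, ← aux_l3 (hA a)]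
      exact Finset.single_le_sum (fun k _ => sq_nonneg (f k)) (Finset.mem_univ j)
    have key : f j - a ≤ (R/2 + 1)/a := by
      rw [le_div_iff₀ ha]
      rcases le_or_gt (f j) a with h | h
      · nlinarith
      · nlinarith [mul_le_mul_of_nonneg_left (show 2*a ≤ f j + a by linarith)
          (le_of_lt (sub_pos.mpr h))]
    linarith
end

section
/- On Γ = {λ ∈ ℝⁿ : 0 < Σᵢ arccot(λᵢ) < π/2}, the function F(λ) = cot(Σᵢ arccot(λᵢ)) is concave. -/
open Real

noncomputable def arccot (x : ℝ) : ℝ := π / 2 - arctan x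

lemma arccot_pos' (x : ℝ) : 0 < arccot x := by
  have := arctan_lt_pi_div_two x
  unfold arccot; linarith

lemma arccot_lt_pi_div_two' {x : ℝ} (hx : 0 < x) : arccot x < π / 2 := by
  have : 0 < arctan x := by
    have := Real.arctan_strictMono hx
    rwa [Real.arctan_zero] at this
  unfold arccot; linarith

lemma pos_of_arccot_lt_pi_div_two {x : ℝ} (h : arccot x < π / 2) : 0 < x := by
  unfold arccot at h
  have h1 : (0:ℝ) < arctan x := by linarith
  by_contra hx
  push_neg at hx
  have h2 : arctan x ≤ arctan 0 := Real.arctan_strictMono.monotone hx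
  rw [Real.arctan_zero] at h2
  linarith

lemma hasDerivAt_arccot (x : ℝ) : HasDerivAt arccot (-(1 + x ^ 2)⁻¹) x :=
  (Real.hasDerivAt_arctan' x).const_sub (π / 2)

lemma continuous_arccot : Continuous arccot :=
  continuous_const.sub Real.continuous_arctan

lemma cot_arccot (x : ℝ) : Real.cot (arccot x) = x := by
  unfold arccot
  rw [Real.cot_eq_cos_div_sin, Real.cos_pi_div_two_sub, Real.sin_pi_div_two_sub,
    ← Real.tan_eq_sin_div_cos, Real.tan_arctan]

lemma tan_arccot (x : ℝ) : Real.tan (arccot x) = x⁻¹ := by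
  unfold arccot
  rw [Real.tan_pi_div_two_sub, Real.tan_arctan]

lemma convexOn_arccot : ConvexOn ℝ (Set.Ioi (0:ℝ)) arccot := by
  apply convexOn_of_hasDerivWithinAt2_nonneg (convex_Ioi (0:ℝ))
    (f' := fun x => -(1 + x ^ 2)⁻¹) (f'' := fun x => 2 * x * ((1 + x ^ 2) ^ 2)⁻¹)
    continuous_arccot.continuousOn
  · intro x hx
    exact (hasDerivAt_arccot x).hasDerivWithinAt
  · intro x hx
    have h1 : HasDerivAt (fun y : ℝ => 1 + y ^ 2) (2 * x) x := by
      simpa using ((hasDerivAt_pow 2 x).const_add 1)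
    have h2 : (1 + x ^ 2) ≠ 0 := by positivity
    have h3 := (h1.inv h2).neg
    have h4 : HasDerivAt (fun y : ℝ => -(1 + y ^ 2)⁻¹) (2 * x * ((1 + x ^ 2) ^ 2)⁻¹) x := by
      refine h3.congr_deriv ?_
      ring
    exact h4.hasDerivWithinAt
  · intro x hx
    rw [interior_Ioi] at hx
    have : (0:ℝ) < x := hx
    positivity

lemma tan_add_le {a b : ℝ} (ha : 0 ≤ a) (hb : 0 ≤ b) (hab : a + b < π / 2) :
    Real.tan a + Real.tan b ≤ Real.tan (a + b) := by
  have hpi := Real.pi_pos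
  have hca : 0 < Real.cos a := Real.cos_pos_of_mem_Ioo ⟨by linarith, by linarith⟩
  have hcb : 0 < Real.cos b := Real.cos_pos_of_mem_Ioo ⟨by linarith, by linarith⟩
  have hcab : 0 < Real.cos (a + b) := Real.cos_pos_of_mem_Ioo ⟨by linarith, hab⟩
  have hsab : 0 ≤ Real.sin (a + b) :=
    Real.sin_nonneg_of_nonneg_of_le_pi (by linarith) (by linarith)
  have hsa : 0 ≤ Real.sin a := Real.sin_nonneg_of_nonneg_of_le_pi ha (by linarith)
  have hsb : 0 ≤ Real.sin b := Real.sin_nonneg_of_nonneg_of_le_pi hb (by linarith)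
  have h1 : Real.tan a + Real.tan b = Real.sin (a + b) / (Real.cos a * Real.cos b) := by
    rw [Real.tan_eq_sin_div_cos, Real.tan_eq_sin_div_cos,
      div_add_div _ _ hca.ne' hcb.ne', Real.sin_add]
  have h2 : Real.cos (a + b) ≤ Real.cos a * Real.cos b := by
    rw [Real.cos_add]
    nlinarith
  rw [h1, Real.tan_eq_sin_div_cos]
  exact div_le_div_of_nonneg_left hsab hcab h2

lemma sum_tan_le {ι : Type*} (s : Finset ι) (θ : ι → ℝ) (hpos : ∀ i ∈ s, 0 < θ i)
    (hs : ∑ i ∈ s, θ i < π / 2) : ∑ i ∈ s, Real.tan (θ i) ≤ Real.tan (∑ i ∈ s, θ i) := by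
  induction s using Finset.cons_induction with
  | empty => simp
  | cons a s ha ih =>
    rw [Finset.sum_cons, Finset.sum_cons]
    rw [Finset.sum_cons] at hs
    have hT0 : 0 ≤ ∑ i ∈ s, θ i :=
      Finset.sum_nonneg fun i hi => (hpos i (Finset.mem_cons_of_mem hi)).le
    have hθa : 0 < θ a := hpos a (Finset.mem_cons_self a s)
    have hTs : ∑ i ∈ s, θ i < π / 2 := by linarith
    have h1 := ih (fun i hi => hpos i (Finset.mem_cons_of_mem hi)) hTs
    have h2 := tan_add_le hθa.le hT0 hs
    linarith

lemma key_ineq {n : ℕ} (lam u : Fin n → ℝ) (hlam : ∀ i, 0 < lam i)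
    (h0 : 0 < ∑ i, arccot (lam i)) (h2 : ∑ i, arccot (lam i) < π / 2) :
    Real.cot (∑ i, arccot (lam i)) * (∑ i, u i) ^ 2 ≤ ∑ i, lam i * u i ^ 2 := by
  have hpi := Real.pi_pos
  set Θ := ∑ i, arccot (lam i) with hΘ
  have hsin : 0 < Real.sin Θ := Real.sin_pos_of_pos_of_lt_pi h0 (by linarith)
  have hcos : 0 < Real.cos Θ := Real.cos_pos_of_mem_Ioo ⟨by linarith, h2⟩
  have hcot : 0 < Real.cot Θ := by rw [Real.cot_eq_cos_div_sin]; positivity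
  have htan : Real.tan Θ = (Real.cot Θ)⁻¹ := by
    rw [Real.tan_eq_sin_div_cos, Real.cot_eq_cos_div_sin, inv_div]
  have hSnn : 0 ≤ ∑ i, lam i * u i ^ 2 :=
    Finset.sum_nonneg fun i _ => mul_nonneg (hlam i).le (sq_nonneg _)
  have hCS : (∑ i, u i) ^ 2 ≤ (∑ i, lam i * u i ^ 2) * (∑ i, (lam i)⁻¹) := by
    calc (∑ i, u i) ^ 2
        = (∑ i, (Real.sqrt (lam i) * u i) * (Real.sqrt (lam i))⁻¹) ^ 2 := by
          congr 1
          refine Finset.sum_congr rfl fun i _ => ?_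
          have hsq : Real.sqrt (lam i) ≠ 0 := by
            rw [Real.sqrt_ne_zero']; exact hlam i
          rw [mul_comm, ← mul_assoc, inv_mul_cancel₀ hsq, one_mul]
      _ ≤ (∑ i, (Real.sqrt (lam i) * u i) ^ 2) * (∑ i, ((Real.sqrt (lam i))⁻¹) ^ 2) :=
          Finset.sum_mul_sq_le_sq_mul_sq _ _ _
      _ = (∑ i, lam i * u i ^ 2) * (∑ i, (lam i)⁻¹) := by
          congr 1
          · refine Finset.sum_congr rfl fun i _ => ?_
            rw [mul_pow, Real.sq_sqrt (hlam i).le]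
          · refine Finset.sum_congr rfl fun i _ => ?_
            rw [inv_pow, Real.sq_sqrt (hlam i).le]
  have htan_sum : ∑ i, (lam i)⁻¹ ≤ Real.tan Θ := by
    have h := sum_tan_le Finset.univ (fun i => arccot (lam i)) (fun i _ => arccot_pos' _) h2
    simpa [tan_arccot] using h
  calc Real.cot Θ * (∑ i, u i) ^ 2
      ≤ Real.cot Θ * ((∑ i, lam i * u i ^ 2) * (∑ i, (lam i)⁻¹)) :=
        mul_le_mul_of_nonneg_left hCS hcot.le
    _ ≤ Real.cot Θ * ((∑ i, lam i * u i ^ 2) * Real.tan Θ) := by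
        apply mul_le_mul_of_nonneg_left _ hcot.le
        exact mul_le_mul_of_nonneg_left htan_sum hSnn
    _ = ∑ i, lam i * u i ^ 2 := by
        rw [htan, mul_comm (∑ i, lam i * u i ^ 2), ← mul_assoc,
          mul_inv_cancel₀ hcot.ne', one_mul]

lemma hasDerivAt_cot' {z : ℝ} (hz : Real.sin z ≠ 0) :
    HasDerivAt Real.cot (-(1 + Real.cot z ^ 2)) z := by
  have h : HasDerivAt (fun y => Real.cos y / Real.sin y)
      ((-Real.sin z * Real.sin z - Real.cos z * Real.cos z) / Real.sin z ^ 2) z :=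
    (Real.hasDerivAt_cos z).div (Real.hasDerivAt_sin z) hz
  have hfun : (fun y => Real.cos y / Real.sin y) = Real.cot := by
    funext y; rw [Real.cot_eq_cos_div_sin]
  rw [hfun] at h
  convert h using 1
  rw [Real.cot_eq_cos_div_sin]
  have hsc := Real.sin_sq_add_cos_sq z
  field_simp
  nlinarith [hsc]

theorem stmt9 (n : ℕ) :
    ConcaveOn ℝ {lam : Fin n → ℝ | 0 < ∑ i, arccot (lam i) ∧ ∑ i, arccot (lam i) < π / 2}
      (fun lam => Real.cot (∑ i, arccot (lam i))) := by
  rcases Nat.eq_zero_or_pos n with hn | hn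
  · subst hn
    have hempty : {lam : Fin 0 → ℝ | 0 < ∑ i, arccot (lam i) ∧ ∑ i, arccot (lam i) < π / 2}
        = ∅ := by
      ext lam; simp
    rw [hempty]
    exact ⟨convex_empty, fun x hx => absurd hx (Set.notMem_empty x)⟩
  haveI : Nonempty (Fin n) := ⟨⟨0, hn⟩⟩
  have hpi := Real.pi_pos
  have hmem_pos : ∀ {lam : Fin n → ℝ}, (∑ i, arccot (lam i) < π / 2) → ∀ i, 0 < lam i := by
    intro lam h i
    apply pos_of_arccot_lt_pi_div_two
    exact lt_of_le_of_lt
      (Finset.single_le_sum (fun j _ => (arccot_pos' (lam j)).le) (Finset.mem_univ i)) h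
  have hconv : Convex ℝ
      {lam : Fin n → ℝ | 0 < ∑ i, arccot (lam i) ∧ ∑ i, arccot (lam i) < π / 2} := by
    intro p hp q hq a b ha hb hab
    obtain ⟨hp1, hp2⟩ := hp
    obtain ⟨hq1, hq2⟩ := hq
    constructor
    · exact Finset.sum_pos (fun i _ => arccot_pos' _) Finset.univ_nonempty
    · have hstep : ∀ i, arccot ((a • p + b • q) i) ≤ a * arccot (p i) + b * arccot (q i) := by
        intro i
        have h := convexOn_arccot.2 (Set.mem_Ioi.mpr (hmem_pos hp2 i))
          (Set.mem_Ioi.mpr (hmem_pos hq2 i)) ha hb hab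
        simpa [smul_eq_mul] using h
      calc ∑ i, arccot ((a • p + b • q) i)
          ≤ ∑ i, (a * arccot (p i) + b * arccot (q i)) :=
            Finset.sum_le_sum fun i _ => hstep i
        _ = a * ∑ i, arccot (p i) + b * ∑ i, arccot (q i) := by
            rw [Finset.sum_add_distrib, ← Finset.mul_sum, ← Finset.mul_sum]
        _ < π / 2 := by
            have h := (convex_Iio (π / 2)) hp2 hq2 ha hb hab
            simpa [smul_eq_mul] using h
  refine ⟨hconv, ?_⟩
  intro x hx y hy a b ha hb hab
  set v : Fin n → ℝ := fun i => y i - x i with hv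
  set c : ℝ → Fin n → ℝ := fun t i => x i + t * v i with hc
  set S : ℝ → ℝ := fun t => ∑ i, arccot (c t i) with hS
  set g : ℝ → ℝ := fun t => Real.cot (S t) with hg
  have hceq : ∀ t, c t = (1 - t) • x + t • y := by
    intro t; funext i
    simp only [hc, hv, Pi.add_apply, Pi.smul_apply, smul_eq_mul]
    ring
  have hmem : ∀ t ∈ Set.Icc (0:ℝ) 1, 0 < S t ∧ S t < π / 2 := by
    intro t ht
    have h1 : (1 - t) • x + t • y ∈
        {lam : Fin n → ℝ | 0 < ∑ i, arccot (lam i) ∧ ∑ i, arccot (lam i) < π / 2} :=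
      hconv hx hy (by linarith [ht.2]) ht.1 (by ring)
    have h2 : S t = ∑ i, arccot (((1 - t) • x + t • y) i) := by
      rw [hS]; simp only [← hceq t]
    exact ⟨by rw [h2]; exact h1.1, by rw [h2]; exact h1.2⟩
  have hcder : ∀ i (t : ℝ), HasDerivAt (fun s => c s i) (v i) t := by
    intro i t
    exact (hasDerivAt_mul_const (v i)).const_add (x i)
  have hSder : ∀ t : ℝ, HasDerivAt S (∑ i, -(1 + c t i ^ 2)⁻¹ * v i) t := by
    intro t
    exact HasDerivAt.fun_sum fun i _ => by
      have h := (hasDerivAt_arccot (c t i)).comp t (hcder i t); exact h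
  set A : ℝ → ℝ := fun t => ∑ i, (1 + c t i ^ 2)⁻¹ * v i with hA
  set A' : ℝ → ℝ := fun t => ∑ i, -(2 * c t i * v i) / (1 + c t i ^ 2) ^ 2 * v i with hA'
  have hAder : ∀ t : ℝ, HasDerivAt A (A' t) t := by
    intro t
    apply HasDerivAt.fun_sum
    intro i _
    have h1 : HasDerivAt (fun s => 1 + c s i ^ 2) (2 * c t i * v i) t := by
      have h := ((hcder i t).pow 2).const_add 1
      simpa [pow_one] using h
    have h2 : (1 + c t i ^ 2) ≠ 0 := by positivity
    have h3 := (h1.inv h2).mul_const (v i)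
    exact h3
  have hsinS : ∀ t ∈ Set.Icc (0:ℝ) 1, Real.sin (S t) ≠ 0 := by
    intro t ht
    exact (Real.sin_pos_of_pos_of_lt_pi (hmem t ht).1 (by linarith [(hmem t ht).2])).ne'
  set G' : ℝ → ℝ := fun t => (1 + g t ^ 2) * A t with hG'
  have hgder : ∀ t ∈ Set.Icc (0:ℝ) 1, HasDerivAt g (G' t) t := by
    intro t ht
    have h1 := (hasDerivAt_cot' (hsinS t ht)).comp t (hSder t)
    have h2 : ∑ i, -(1 + c t i ^ 2)⁻¹ * v i = -A t := by
      rw [hA, ← Finset.sum_neg_distrib]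
      exact Finset.sum_congr rfl fun i _ => by ring
    rw [h2] at h1
    refine h1.congr_deriv ?_
    rw [hG', hg]
    ring
  set G'' : ℝ → ℝ := fun t => 2 * g t * G' t * A t + (1 + g t ^ 2) * A' t with hG''
  have hg'der : ∀ t ∈ Set.Icc (0:ℝ) 1, HasDerivAt G' (G'' t) t := by
    intro t ht
    have h1 : HasDerivAt (fun s => 1 + g s ^ 2) (2 * g t * G' t) t := by
      have h := (((hgder t ht).pow 2).const_add 1)
      refine h.congr_deriv ?_
      simp [pow_one]
    exact h1.mul (hAder t)
  have hgconc : ConcaveOn ℝ (Set.Icc (0:ℝ) 1) g := by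
    apply concaveOn_of_hasDerivWithinAt2_nonpos (convex_Icc 0 1) (f' := G') (f'' := G'')
      (fun t ht => (hgder t ht).continuousAt.continuousWithinAt)
    · intro t ht
      rw [interior_Icc] at ht
      exact (hgder t (Set.Ioo_subset_Icc_self ht)).hasDerivWithinAt
    · intro t ht
      rw [interior_Icc] at ht
      exact (hg'der t (Set.Ioo_subset_Icc_self ht)).hasDerivWithinAt
    · intro t ht
      rw [interior_Icc] at ht
      have htIcc : t ∈ Set.Icc (0:ℝ) 1 := Set.Ioo_subset_Icc_self ht
      obtain ⟨hS0, hS2⟩ := hmem t htIcc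
      have hS0' : 0 < ∑ i, arccot (c t i) := hS0
      have hS2' : ∑ i, arccot (c t i) < π / 2 := hS2
      have hlam : ∀ i, 0 < c t i := hmem_pos hS2'
      have hkey : g t * A t ^ 2 ≤ ∑ i, c t i * ((1 + c t i ^ 2)⁻¹ * v i) ^ 2 :=
        key_ineq (c t) (fun i => (1 + c t i ^ 2)⁻¹ * v i) hlam hS0' hS2'
      have hA'eq : A' t = -2 * ∑ i, c t i * ((1 + c t i ^ 2)⁻¹ * v i) ^ 2 := by
        rw [hA', Finset.mul_sum]
        exact Finset.sum_congr rfl fun i _ => by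
          rw [div_eq_mul_inv, ← inv_pow]; ring
      have hfactor : (0:ℝ) ≤ 1 + g t ^ 2 := by positivity
      have hG''t : G'' t
          = 2 * g t * ((1 + g t ^ 2) * A t) * A t + (1 + g t ^ 2) * A' t := rfl
      rw [hG''t, hA'eq]
      nlinarith [mul_le_mul_of_nonneg_left hkey hfactor]
  have h0m : (0:ℝ) ∈ Set.Icc (0:ℝ) 1 := ⟨le_refl 0, zero_le_one⟩
  have h1m : (1:ℝ) ∈ Set.Icc (0:ℝ) 1 := ⟨zero_le_one, le_refl 1⟩
  have hfin := hgconc.2 h0m h1m ha hb hab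
  have hb1 : a • (0:ℝ) + b • (1:ℝ) = b := by simp
  rw [hb1] at hfin
  have hc0 : c 0 = x := by funext i; simp [hc]
  have hc1 : c 1 = y := by funext i; simp [hc, hv]
  have hcb : c b = a • x + b • y := by
    funext i
    have ha' : a = 1 - b := by linarith
    simp only [hc, hv, Pi.add_apply, Pi.smul_apply, smul_eq_mul, ha']
    ring
  have hg0 : g 0 = Real.cot (∑ i, arccot (c 0 i)) := rfl
  have hg1 : g 1 = Real.cot (∑ i, arccot (c 1 i)) := rfl
  have hgb : g b = Real.cot (∑ i, arccot (c b i)) := rfl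
  rw [hc0] at hg0
  rw [hc1] at hg1
  rw [hcb] at hgb
  rw [hg0, hg1, hgb] at hfin
  simpa [smul_eq_mul] using hfin
end

section
/- Suppose Σᵢ arccot(λᵢ) ∈ (δ₁, π/2 − δ₁) for some δ₁ ∈ (0, π/4), with λ₁ ≥ ⋯ ≥ λₙ, and suppose λₙ ≥ √(κ(λ₁² − 1)) for some κ > 0. Then tan(δ₁) ≤ λₙ ≤ cot(δ₁/n), and consequently λ₁ ≤ √(1 + κ⁻¹·cot²(δ₁/n)). -/
open Real

theorem stmt11 (n : ℕ) (lam : Fin (n + 1) → ℝ) (δ₁ κ : ℝ)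
    (hδ0 : 0 < δ₁) (hδ1 : δ₁ < π / 4)
    (hlo : δ₁ < ∑ i, arccot (lam i)) (hhi : ∑ i, arccot (lam i) < π / 2 - δ₁)
    (hsort : ∀ i j : Fin (n + 1), i ≤ j → lam j ≤ lam i)
    (hκ : 0 < κ)
    (hlow : Real.sqrt (κ * (lam 0 ^ 2 - 1)) ≤ lam (Fin.last n)) :
    Real.tan δ₁ ≤ lam (Fin.last n) ∧
      lam (Fin.last n) ≤ Real.cot (δ₁ / (n + 1)) ∧
      lam 0 ≤ Real.sqrt (1 + κ⁻¹ * Real.cot (δ₁ / (n + 1)) ^ 2) := by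
  have hπ := Real.pi_pos
  have hpos : ∀ i : Fin (n + 1), 0 < arccot (lam i) := fun i => by
    have := Real.arctan_lt_pi_div_two (lam i)
    unfold arccot; linarith
  -- single term ≤ sum
  have hsingle : arccot (lam (Fin.last n)) ≤ ∑ i, arccot (lam i) :=
    Finset.single_le_sum (fun i _ => (hpos i).le) (Finset.mem_univ _)
  have h1 : arccot (lam (Fin.last n)) < π / 2 - δ₁ := lt_of_le_of_lt hsingle hhi
  have hδa : δ₁ < arctan (lam (Fin.last n)) := by unfold arccot at h1; linarith
  have hδhalf : δ₁ < π / 2 := by linarith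
  have htan1 : Real.tan δ₁ ≤ lam (Fin.last n) := by
    have := Real.tan_lt_tan_of_lt_of_lt_pi_div_two (by linarith : -(π/2) < δ₁)
      (Real.arctan_lt_pi_div_two _) hδa
    rw [Real.tan_arctan] at this
    exact this.le
  -- sum ≤ (n+1) * arccot (lam last)
  have hmax : ∀ i : Fin (n + 1), arccot (lam i) ≤ arccot (lam (Fin.last n)) := fun i => by
    have h := hsort i (Fin.last n) (Fin.le_last i)
    have := Real.arctan_strictMono.monotone h
    unfold arccot; linarith
  have hsum : ∑ i, arccot (lam i) ≤ (n + 1 : ℝ) * arccot (lam (Fin.last n)) := by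
    calc ∑ i, arccot (lam i) ≤ ∑ _i : Fin (n+1), arccot (lam (Fin.last n)) :=
          Finset.sum_le_sum (fun i _ => hmax i)
      _ = (n + 1 : ℝ) * arccot (lam (Fin.last n)) := by
          simp [Finset.sum_const]
  have hn1 : (0:ℝ) < (n:ℝ) + 1 := by positivity
  have h2 : δ₁ / (n + 1) < arccot (lam (Fin.last n)) := by
    rw [div_lt_iff₀ hn1]
    calc δ₁ < ∑ i, arccot (lam i) := hlo
      _ ≤ (n + 1 : ℝ) * arccot (lam (Fin.last n)) := hsum
      _ = arccot (lam (Fin.last n)) * ((n:ℝ) + 1) := by ring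
  have hδn0 : 0 < δ₁ / (n + 1) := by positivity
  have hδn : δ₁ / (n + 1) < π / 2 := by
    have : δ₁ / ((n:ℝ) + 1) ≤ δ₁ := by
      rw [div_le_iff₀ hn1]; nlinarith
    linarith
  have hcot : Real.cot (δ₁ / (n + 1)) = Real.tan (π / 2 - δ₁ / (n + 1)) := by
    rw [Real.tan_pi_div_two_sub, Real.cot_eq_cos_div_sin, Real.tan_eq_sin_div_cos, inv_div]
  have htan2 : lam (Fin.last n) ≤ Real.cot (δ₁ / (n + 1)) := by
    have harc : arctan (lam (Fin.last n)) < π / 2 - δ₁ / (n + 1) := by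
      unfold arccot at h2; push_cast at h2 ⊢; linarith
    have := Real.tan_lt_tan_of_lt_of_lt_pi_div_two
      (Real.neg_pi_div_two_lt_arctan _) (by linarith) harc
    rw [Real.tan_arctan] at this
    rw [hcot]
    exact_mod_cast this.le
  refine ⟨htan1, htan2, ?_⟩
  have htpos : 0 < Real.tan δ₁ := Real.tan_pos_of_pos_of_lt_pi_div_two hδ0 hδhalf
  have hlast0 : 0 < lam (Fin.last n) := lt_of_lt_of_le htpos htan1
  have hC0 : 0 ≤ Real.cot (δ₁ / (n + 1)) := le_trans hlast0.le htan2
  have h0last : lam (Fin.last n) ≤ lam 0 := hsort 0 (Fin.last n) (Fin.zero_le _)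
  have hlam0 : 0 < lam 0 := lt_of_lt_of_le hlast0 h0last
  set C := Real.cot (δ₁ / (n + 1)) with hCdef
  have hsq : lam 0 ^ 2 ≤ 1 + κ⁻¹ * C ^ 2 := by
    by_cases h01 : lam 0 ^ 2 - 1 ≤ 0
    · have : 0 ≤ κ⁻¹ * C ^ 2 := by positivity
      linarith
    · push_neg at h01
      have harg : 0 ≤ κ * (lam 0 ^ 2 - 1) := by positivity
      have hsqrt : κ * (lam 0 ^ 2 - 1) ≤ C ^ 2 := by
        have h := Real.sq_sqrt harg
        nlinarith [le_trans hlow htan2, Real.sqrt_nonneg (κ * (lam 0 ^ 2 - 1))]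
      have : lam 0 ^ 2 - 1 ≤ κ⁻¹ * C ^ 2 := by
        rw [inv_mul_eq_div, le_div_iff₀ hκ]
        nlinarith
      linarith
  exact (Real.le_sqrt hlam0.le (by positivity)).mpr hsq
end

section
/- Let S: [0,∞) → [0,∞) be C¹ with ∫₀^∞ S(t) dt < ∞, and suppose S′(t) ≤ C(S(t) + √S(t)) for all t and some constant C > 0. Then S(t) → 0 as t → ∞. -/
open Real Filter

theorem stmt14 (S : ℝ → ℝ) (C : ℝ) (hC : 0 < C)
    (hS0 : ∀ t, 0 ≤ t → 0 ≤ S t)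
    (hS1 : ContDiffOn ℝ 1 S (Set.Ici 0))
    (hint : MeasureTheory.IntegrableOn S (Set.Ici 0))
    (hS' : ∀ t, 0 ≤ t → derivWithin S (Set.Ici 0) t ≤ C * (S t + Real.sqrt (S t))) :
    Tendsto S atTop (nhds 0) := by
  set K : ℝ := 2 * C with hK
  have hKpos : 0 < K := by positivity
  -- derivative bound at interior points
  have hderiv : ∀ x : ℝ, 0 < x → deriv S x ≤ K * (S x + 1) := by
    intro x hx
    have hmem : Set.Ici (0 : ℝ) ∈ nhds x := Ici_mem_nhds hx
    have h1 : derivWithin S (Set.Ici 0) x = deriv S x := derivWithin_of_mem_nhds hmem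
    have h2 := hS' x hx.le
    rw [h1] at h2
    have hs0 : 0 ≤ S x := hS0 x hx.le
    have hsq : Real.sqrt (S x) ≤ (S x + 1) / 2 := by
      nlinarith [sq_nonneg (Real.sqrt (S x) - 1), Real.sq_sqrt hs0]
    nlinarith
  -- differentiability at interior points
  have hdiffAt : ∀ x : ℝ, 0 < x → DifferentiableAt ℝ S x := by
    intro x hx
    exact ((hS1.differentiableOn one_ne_zero) x (le_of_lt hx)).differentiableAt (Ici_mem_nhds hx)
  -- g is antitone
  set g : ℝ → ℝ := fun t => (S t + 1) * Real.exp (-K * t) with hg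
  have hanti : AntitoneOn g (Set.Ici 0) := by
    apply antitoneOn_of_deriv_nonpos (convex_Ici 0)
    · exact ((hS1.continuousOn.add continuousOn_const).mul
        (Real.continuous_exp.comp (continuous_const.mul continuous_id)).continuousOn)
    · rw [interior_Ici]
      intro x hx
      have hx' : (0:ℝ) < x := hx
      exact (((hdiffAt x hx').add_const 1).mul
        (((differentiableAt_id.const_mul (-K)).exp))).differentiableWithinAt
    · rw [interior_Ici]
      intro x hx
      have hx' : (0:ℝ) < x := hx
      have h1 : HasDerivAt (fun t => S t + 1) (deriv S x) x :=
        (hdiffAt x hx').hasDerivAt.add_const 1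
      have h2 : HasDerivAt (fun t : ℝ => Real.exp (-K * t)) (Real.exp (-K * x) * (-K)) x := by
        have := ((hasDerivAt_id x).const_mul (-K)).exp
        simpa using this
      have h3 : HasDerivAt g (deriv S x * Real.exp (-K * x)
          + (S x + 1) * (Real.exp (-K * x) * (-K))) x := h1.mul h2
      rw [h3.deriv]
      have hexp : 0 < Real.exp (-K * x) := Real.exp_pos _
      have hb := hderiv x hx'
      nlinarith
  -- Gronwall-type inequality
  have key : ∀ s t : ℝ, 0 ≤ s → s ≤ t → S t + 1 ≤ Real.exp (K * (t - s)) * (S s + 1) := by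
    intro s t hs hst
    have h := hanti hs (le_trans hs hst) hst
    have hexp_t : 0 < Real.exp (-K * t) := Real.exp_pos _
    have h2 : S t + 1 ≤ (S s + 1) * Real.exp (-K * s) / Real.exp (-K * t) := by
      rw [le_div_iff₀ hexp_t]
      exact h
    calc S t + 1 ≤ (S s + 1) * Real.exp (-K * s) / Real.exp (-K * t) := h2
      _ = Real.exp (K * (t - s)) * (S s + 1) := by
          rw [div_eq_mul_inv, ← Real.exp_neg, mul_assoc, ← Real.exp_add]
          ring_nf
  -- integrability on subintervals
  have hii : ∀ a b : ℝ, 0 ≤ a → 0 ≤ b → IntervalIntegrable S MeasureTheory.volume a b := by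
    intro a b ha hb
    apply MeasureTheory.IntegrableOn.intervalIntegrable
    apply hint.mono_set
    intro x hx
    rw [Set.mem_uIcc] at hx
    rcases hx with ⟨h1, _⟩ | ⟨h1, _⟩
    · exact le_trans ha h1
    · exact le_trans hb h1
  -- tail of the integral tends to 0
  have htail : ∀ δ : ℝ, 0 < δ → Tendsto
      (fun t => ∫ x in (t - δ)..t, S x) atTop (nhds 0) := by
    intro δ hδ
    have hIoi : MeasureTheory.IntegrableOn S (Set.Ioi 0) := hint.mono_set Set.Ioi_subset_Ici_self
    have h1 : Tendsto (fun t : ℝ => ∫ x in (0:ℝ)..t, S x) atTop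
        (nhds (∫ x in Set.Ioi (0:ℝ), S x)) :=
      MeasureTheory.intervalIntegral_tendsto_integral_Ioi 0 hIoi tendsto_id
    have h2 : Tendsto (fun t : ℝ => ∫ x in (0:ℝ)..(t - δ), S x) atTop
        (nhds (∫ x in Set.Ioi (0:ℝ), S x)) :=
      MeasureTheory.intervalIntegral_tendsto_integral_Ioi 0 hIoi
        (tendsto_atTop_add_const_right atTop (-δ) tendsto_id)
    have h3 := h1.sub h2
    rw [sub_self] at h3
    apply h3.congr'
    filter_upwards [eventually_ge_atTop δ] with t ht
    have ha : (0:ℝ) ≤ t - δ := by linarith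
    rw [← intervalIntegral.integral_add_adjacent_intervals (hii 0 (t - δ) le_rfl ha)
      (hii (t - δ) t ha (by linarith))]
    ring
  -- main argument
  rw [NormedAddCommGroup.tendsto_nhds_zero]
  intro ε hε
  set η : ℝ := ε / (2 + ε) with hη
  have hηpos : 0 < η := by positivity
  set δ : ℝ := Real.log (1 + ε / 2) / K with hδdef
  have hδpos : 0 < δ := by
    apply div_pos _ hKpos
    apply Real.log_pos
    linarith
  have hexpδ : Real.exp (K * δ) = 1 + ε / 2 := by
    rw [hδdef, mul_div_cancel₀ _ (ne_of_gt hKpos)]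
    exact Real.exp_log (by linarith)
  have htail' := (htail δ hδpos).eventually (eventually_lt_nhds (mul_pos hηpos hδpos))
  filter_upwards [eventually_ge_atTop δ, htail'] with t ht hInt
  have ht0 : (0:ℝ) ≤ t - δ := by linarith
  -- find s in [t-δ, t] with S s < η
  have hex : ∃ s ∈ Set.Icc (t - δ) t, S s < η := by
    by_contra hcon
    push_neg at hcon
    have hmono : η * δ ≤ ∫ x in (t - δ)..t, S x := by
      have := intervalIntegral.integral_mono_on (by linarith : t - δ ≤ t)
        (intervalIntegrable_const (c := η)) (hii (t - δ) t ht0 (by linarith))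
        (fun x hx => hcon x hx)
      rw [intervalIntegral.integral_const, smul_eq_mul] at this
      calc η * δ = (t - (t - δ)) * η := by ring
        _ ≤ _ := this
    linarith
  obtain ⟨s, hs, hSs⟩ := hex
  have hkey := key s t (le_trans ht0 hs.1) hs.2
  have hexp_mono : Real.exp (K * (t - s)) ≤ Real.exp (K * δ) := by
    apply Real.exp_le_exp.2
    have : t - s ≤ δ := by linarith [hs.1]
    nlinarith
  have hSs0 : 0 ≤ S s := hS0 s (le_trans ht0 hs.1)
  have hSt0 : 0 ≤ S t := hS0 t (by linarith)
  have hbound : S t < ε := by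
    have h1 : S t + 1 ≤ Real.exp (K * δ) * (S s + 1) := by
      calc S t + 1 ≤ Real.exp (K * (t - s)) * (S s + 1) := hkey
        _ ≤ Real.exp (K * δ) * (S s + 1) := by
            apply mul_le_mul_of_nonneg_right hexp_mono (by linarith)
    rw [hexpδ] at h1
    have h2 : (1 + ε / 2) * (S s + 1) < (1 + ε / 2) * (η + 1) := by
      apply mul_lt_mul_of_pos_left (by linarith) (by linarith)
    have h3 : (1 + ε / 2) * (η + 1) = 1 + ε := by
      field_simp [hη]
      rw [hη]
      field_simp
      ring
    linarith
  rw [Real.norm_eq_abs, abs_of_nonneg hSt0]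
  exact hbound
end

section
/- Let S: [0,∞) → [0,∞) satisfy √(S(t)) + 1 ≤ e^{C(t−s)}(√(S(s)) + 1) for all t > s ≥ 0 and ∫₀^∞ S(t)dt < ∞. Then for every ε > 0 there is T such that S(t) ≤ (√ε e^{Cε} + Cε e^{Cε})² for all t ≥ T; in particular lim_{t→∞} S(t) = 0. -/
open Real Filter

theorem stmt15 (S : ℝ → ℝ) (C : ℝ) (hC : 0 < C)
    (hS0 : ∀ t, 0 ≤ t → 0 ≤ S t)
    (hctrl : ∀ s t : ℝ, 0 ≤ s → s < t →
      Real.sqrt (S t) + 1 ≤ Real.exp (C * (t - s)) * (Real.sqrt (S s) + 1))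
    (hint : MeasureTheory.IntegrableOn S (Set.Ici 0)) :
    (∀ ε > 0, ∃ T : ℝ, ∀ t ≥ T,
        S t ≤ (Real.sqrt ε * Real.exp (C * ε) + C * ε * Real.exp (C * ε)) ^ 2) ∧
      Tendsto S atTop (nhds 0) := by
  have hint' : MeasureTheory.IntegrableOn S (Set.Ioi 0) :=
    hint.mono_set Set.Ioi_subset_Ici_self
  set L : ℝ := ∫ x in Set.Ioi (0:ℝ), S x with hLdef
  have hL : Tendsto (fun u : ℝ => ∫ x in (0:ℝ)..u, S x) atTop (nhds L) :=
    MeasureTheory.intervalIntegral_tendsto_integral_Ioi 0 hint' tendsto_id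
  -- main bound
  have main : ∀ ε > 0, ∃ T : ℝ, ∀ t ≥ T,
      S t ≤ (Real.sqrt ε * Real.exp (C * ε) + C * ε * Real.exp (C * ε)) ^ 2 := by
    intro ε hε
    have hε2 : 0 < ε * ε := mul_pos hε hε
    obtain ⟨t₀, ht₀⟩ :=
      ((hL.eventually (Metric.ball_mem_nhds L hε2)).and (eventually_ge_atTop (0:ℝ))).exists
    obtain ⟨hdist, ht₀0⟩ := ht₀
    -- tail integral is small
    have htail_int : MeasureTheory.IntegrableOn S (Set.Ioi t₀) :=
      hint.mono_set (fun x hx => le_trans ht₀0 (le_of_lt hx))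
    have hIoc_int : MeasureTheory.IntegrableOn S (Set.Ioc 0 t₀) :=
      hint.mono_set (fun x hx => le_of_lt hx.1)
    have hsplit : L = (∫ x in Set.Ioc 0 t₀, S x) + ∫ x in Set.Ioi t₀, S x := by
      rw [hLdef, ← Set.Ioc_union_Ioi_eq_Ioi ht₀0]
      exact MeasureTheory.setIntegral_union (Set.Ioc_disjoint_Ioi le_rfl)
        measurableSet_Ioi hIoc_int htail_int
    have hIoc_eq : (∫ x in (0:ℝ)..t₀, S x) = ∫ x in Set.Ioc 0 t₀, S x :=
      intervalIntegral.integral_of_le ht₀0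
    have htail_nonneg : 0 ≤ ∫ x in Set.Ioi t₀, S x := by
      apply MeasureTheory.setIntegral_nonneg measurableSet_Ioi
      intro x hx
      exact hS0 x (le_trans ht₀0 (le_of_lt hx))
    have htail_small : (∫ x in Set.Ioi t₀, S x) < ε * ε := by
      rw [Real.dist_eq, hIoc_eq] at hdist
      have := abs_lt.mp hdist
      linarith [this.1, this.2, hsplit]
    refine ⟨t₀ + ε + 1, fun t ht => ?_⟩
    -- find a good point t' in [t-ε, t]
    have hkey : ∃ t' ∈ Set.Icc (t - ε) t, S t' ≤ ε := by
      by_contra hcon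
      push_neg at hcon
      have hsub : Set.Icc (t - ε) t ⊆ Set.Ioi t₀ := by
        intro x hx
        have : t₀ < t - ε := by linarith [hx.1]
        exact lt_of_lt_of_le this hx.1
      have hIcc_int : MeasureTheory.IntegrableOn S (Set.Icc (t - ε) t) :=
        htail_int.mono_set hsub
      have hmeas : MeasureTheory.volume (Set.Icc (t - ε) t) = ENNReal.ofReal ε := by
        rw [Real.volume_Icc]; ring_nf
      have hge := MeasureTheory.setIntegral_ge_of_const_le (μ := MeasureTheory.volume)
        measurableSet_Icc (by rw [hmeas]; exact ENNReal.ofReal_ne_top)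
        (fun x hx => (hcon x hx).le) hIcc_int
      rw [MeasureTheory.measureReal_def, hmeas, ENNReal.toReal_ofReal hε.le, smul_eq_mul] at hge
      have hmono : (∫ x in Set.Icc (t - ε) t, S x) ≤ ∫ x in Set.Ioi t₀, S x := by
        apply MeasureTheory.setIntegral_mono_set htail_int
        · filter_upwards [MeasureTheory.ae_restrict_mem measurableSet_Ioi] with x hx
          exact hS0 x (le_trans ht₀0 (le_of_lt hx))
        · exact Filter.Eventually.of_forall hsub
      linarith
    obtain ⟨t', ht'mem, ht'S⟩ := hkey
    have ht'0 : 0 ≤ t' := by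
      have := ht'mem.1; linarith
    have hSt0 : 0 ≤ S t := hS0 t (by linarith [ht'mem.2])
    have hexp1 : (1:ℝ) ≤ Real.exp (C * ε) := by
      rw [Real.one_le_exp_iff]; positivity
    have hsqe : Real.sqrt (S t') ≤ Real.sqrt ε := Real.sqrt_le_sqrt ht'S
    have hbound : Real.sqrt (S t) ≤
        Real.sqrt ε * Real.exp (C * ε) + C * ε * Real.exp (C * ε) := by
      have hexpineq : Real.exp (C * ε) - 1 ≤ C * ε * Real.exp (C * ε) := by
        have h1 : (-(C * ε)) + 1 ≤ Real.exp (-(C * ε)) := Real.add_one_le_exp _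
        have h2 : 0 < Real.exp (C * ε) := Real.exp_pos _
        have h3 : Real.exp (-(C * ε)) * Real.exp (C * ε) = 1 := by
          rw [← Real.exp_add]; simp
        nlinarith
      rcases lt_or_eq_of_le ht'mem.2 with hlt | heq
      · have hc := hctrl t' t ht'0 hlt
        have hexp_le : Real.exp (C * (t - t')) ≤ Real.exp (C * ε) := by
          apply Real.exp_le_exp.mpr
          have : t - t' ≤ ε := by linarith [ht'mem.1]
          nlinarith
        have hpos : 0 ≤ Real.sqrt (S t') + 1 := by positivity
        have : Real.sqrt (S t) + 1 ≤ Real.exp (C * ε) * (Real.sqrt ε + 1) := by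
          calc Real.sqrt (S t) + 1 ≤ Real.exp (C * (t - t')) * (Real.sqrt (S t') + 1) := hc
            _ ≤ Real.exp (C * ε) * (Real.sqrt ε + 1) := by
                apply mul_le_mul hexp_le (by linarith) hpos (Real.exp_pos _).le
        nlinarith
      · have : Real.sqrt (S t) ≤ Real.sqrt ε := by rw [heq] at hsqe; exact hsqe
        have h4 : 0 ≤ Real.sqrt ε := Real.sqrt_nonneg _
        have h5 : 0 ≤ C * ε * Real.exp (C * ε) := by positivity
        nlinarith
    calc S t = Real.sqrt (S t) ^ 2 := (Real.sq_sqrt hSt0).symm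
      _ ≤ (Real.sqrt ε * Real.exp (C * ε) + C * ε * Real.exp (C * ε)) ^ 2 := by
          apply pow_le_pow_left₀ (Real.sqrt_nonneg _) hbound
  refine ⟨main, ?_⟩
  -- tendsto part
  rw [Metric.tendsto_atTop]
  intro δ hδ
  -- choose small ε with bound < δ
  have hcont : Tendsto (fun ε : ℝ =>
      (Real.sqrt ε * Real.exp (C * ε) + C * ε * Real.exp (C * ε)) ^ 2)
      (nhds 0) (nhds 0) := by
    have h0 : ((Real.sqrt 0 * Real.exp (C * 0) + C * 0 * Real.exp (C * 0)) ^ 2 : ℝ) = 0 := by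
      simp
    have : Continuous (fun ε : ℝ =>
        (Real.sqrt ε * Real.exp (C * ε) + C * ε * Real.exp (C * ε)) ^ 2) := by
      continuity
    have := this.tendsto 0
    rwa [h0] at this
  have hcont' : Tendsto (fun ε : ℝ =>
      (Real.sqrt ε * Real.exp (C * ε) + C * ε * Real.exp (C * ε)) ^ 2)
      (nhdsWithin 0 (Set.Ioi 0)) (nhds 0) := hcont.mono_left nhdsWithin_le_nhds
  obtain ⟨ε, hεδ, hε0⟩ :=
    ((hcont'.eventually (gt_mem_nhds hδ)).and self_mem_nhdsWithin).exists
  obtain ⟨T, hT⟩ := main ε hε0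
  refine ⟨max T 0, fun t ht => ?_⟩
  have ht0 : 0 ≤ t := le_trans (le_max_right T 0) ht
  have hSt := hT t (le_trans (le_max_left T 0) ht)
  rw [Real.dist_eq, sub_zero, abs_of_nonneg (hS0 t ht0)]
  exact lt_of_le_of_lt hSt hεδ
end

section
/- For a Hermitian matrix H with eigenvalue vector λ ∈ Γ = {λ : 0 < Σᵢ arccot λᵢ < π/2}, one has Re det(H + iI)/Im det(H + iI) = cot(Σᵢ arccot λᵢ), and Im det(H + iI) > 0. -/
open Real Matrix

lemma arccot_cos_sin (x : ℝ) :
    (x : ℂ) + Complex.I = (Real.sqrt (1 + x ^ 2) : ℂ) * Complex.exp (arccot x * Complex.I) := by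
  rw [Complex.exp_mul_I]
  have hs : Real.sin (arccot x) = 1 / Real.sqrt (1 + x ^ 2) := by
    rw [arccot, Real.sin_pi_div_two_sub, Real.cos_arctan]
  have hc : Real.cos (arccot x) = x / Real.sqrt (1 + x ^ 2) := by
    rw [arccot, Real.cos_pi_div_two_sub, Real.sin_arctan]
  have hpos : (0 : ℝ) < Real.sqrt (1 + x ^ 2) := Real.sqrt_pos.2 (by positivity)
  have h0 : (Real.sqrt (1 + x ^ 2) : ℂ) ≠ 0 := by exact_mod_cast hpos.ne'
  rw [show Complex.cos (arccot x) = (Real.cos (arccot x) : ℂ) from (Complex.ofReal_cos _).symm,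
      show Complex.sin (arccot x) = (Real.sin (arccot x) : ℂ) from (Complex.ofReal_sin _).symm,
      hc, hs]
  push_cast
  field_simp

theorem stmt19 (n : ℕ) (H : Matrix (Fin n) (Fin n) ℂ) (hH : H.IsHermitian)
    (hΓ : 0 < ∑ i, arccot (hH.eigenvalues i) ∧ ∑ i, arccot (hH.eigenvalues i) < π / 2) :
    0 < (det (H + Complex.I • (1 : Matrix (Fin n) (Fin n) ℂ))).im ∧
      (det (H + Complex.I • (1 : Matrix (Fin n) (Fin n) ℂ))).re /
          (det (H + Complex.I • (1 : Matrix (Fin n) (Fin n) ℂ))).im =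
        Real.cot (∑ i, arccot (hH.eigenvalues i)) := by
  set Θ := ∑ i, arccot (hH.eigenvalues i) with hΘ
  have hdet : det (H + Complex.I • (1 : Matrix (Fin n) (Fin n) ℂ))
      = ∏ i, ((hH.eigenvalues i : ℂ) + Complex.I) := by
    set U := (hH.eigenvectorUnitary : Matrix (Fin n) (Fin n) ℂ)
    have hU : U * star U = 1 := (Matrix.mem_unitaryGroup_iff).mp hH.eigenvectorUnitary.2
    have key : H + Complex.I • (1 : Matrix (Fin n) (Fin n) ℂ)
        = U * (diagonal (fun i => (hH.eigenvalues i : ℂ) + Complex.I)) * star U := by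
      have hsp : H = U * diagonal (RCLike.ofReal ∘ hH.eigenvalues) * star U := by
        exact hH.spectral_theorem.trans (Unitary.conjStarAlgAut_apply _ _)
      have : (diagonal (fun i => (hH.eigenvalues i : ℂ) + Complex.I))
          = diagonal (RCLike.ofReal ∘ hH.eigenvalues) + Complex.I • 1 := by
        rw [smul_one_eq_diagonal, ← diagonal_add]
        rfl
      rw [this, mul_add, add_mul, ← hsp]
      congr 1
      rw [mul_smul_comm, smul_mul_assoc, mul_one, hU]
    rw [key, det_mul_right_comm, hU, one_mul, det_diagonal]
  have prodexp : ∏ i, ((hH.eigenvalues i : ℂ) + Complex.I)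
      = (∏ i, (Real.sqrt (1 + hH.eigenvalues i ^ 2) : ℂ)) * Complex.exp (Θ * Complex.I) := by
    rw [Finset.prod_congr rfl (fun i _ => arccot_cos_sin (hH.eigenvalues i)),
      Finset.prod_mul_distrib, ← Complex.exp_sum]
    congr 2
    rw [← Finset.sum_mul]
    norm_cast
  set R := ∏ i, Real.sqrt (1 + hH.eigenvalues i ^ 2) with hR
  have hRpos : 0 < R := Finset.prod_pos (fun i _ => Real.sqrt_pos.2 (by positivity))
  have hdet2 : det (H + Complex.I • (1 : Matrix (Fin n) (Fin n) ℂ))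
      = (R : ℂ) * Complex.exp (Θ * Complex.I) := by
    rw [hdet, prodexp, hR]; push_cast; ring
  have him : (det (H + Complex.I • (1 : Matrix (Fin n) (Fin n) ℂ))).im = R * Real.sin Θ := by
    rw [hdet2, Complex.exp_mul_I]
    simp [Complex.cos_ofReal_re, ← Complex.ofReal_sin, ← Complex.ofReal_cos]
  have hre : (det (H + Complex.I • (1 : Matrix (Fin n) (Fin n) ℂ))).re = R * Real.cos Θ := by
    rw [hdet2, Complex.exp_mul_I]
    simp [← Complex.ofReal_sin, ← Complex.ofReal_cos]
  have hsin : 0 < Real.sin Θ := Real.sin_pos_of_pos_of_lt_pi hΓ.1 (hΓ.2.trans (by linarith [Real.pi_pos]))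
  constructor
  · rw [him]; positivity
  · rw [hre, him, Real.cot_eq_cos_div_sin]
    field_simp
end
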